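/- arXiv:1812.11246 — 4 statements merged into one kernel-verified Lean document; each statement's English description precedes it below -/
import Mathlib

section
/- Let {a_t} be strictly stationary random variables with ‖a‖_{φ_r} := inf{c > 0 : E[exp(|a_t/c|^r)] ≤ 2} < ∞ for some r > 1, let {ℱ_t} be sigma-fields, and define M_n = ∏_{t=1}^n e^{a_t}/E[e^{a_t}|ℱ_t]. Then for every p ∈ (1, ∞) and b ∈ (1, ∞): E[M_n^p]^{1/p} ≤ ( exp((4pn‖a‖_{φ_r})^{r/(r−1)} b^{1/(r−1)}) + (b/(b−1))·2^{1/b} )^{1/p}. Consequently log E[M_n^p] grows only algebraically (like n^{r/(r−1)}) rather than exponentially in n. -/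
open MeasureTheory Filter

/-- Young-type pointwise bound: `κ y ≤ y^r + κ^{r/(r-1)}`. -/
lemma young_pt' {κ r : ℝ} (hκ : 0 ≤ κ) (hr : 1 < r) {y : ℝ} (hy : 0 ≤ y) :
    κ * y ≤ y ^ r + κ ^ (r / (r - 1)) := by
  have hr1 : (0:ℝ) < r - 1 := by linarith
  rcases le_or_gt y (κ ^ (1 / (r - 1))) with h | h
  · have h1 : κ * y ≤ κ * κ ^ (1 / (r - 1)) :=
      mul_le_mul_of_nonneg_left h hκ
    have h2 : κ * κ ^ (1 / (r - 1)) = κ ^ (r / (r - 1)) := by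
      rcases eq_or_lt_of_le hκ with h0 | h0
      · rw [← h0, Real.zero_rpow (by positivity), Real.zero_rpow (by positivity), mul_zero]
      · rw [← Real.rpow_one_add' (le_of_lt h0) (by positivity)]
        congr 1
        field_simp
        ring
    have h3 : (0:ℝ) ≤ y ^ r := Real.rpow_nonneg hy r
    linarith
  · rcases eq_or_lt_of_le hy with h0 | h0
    · rw [← h0, mul_zero]
      positivity
    · have hκy : κ ≤ y ^ (r - 1) := by
        have := Real.rpow_le_rpow (Real.rpow_nonneg hκ _) h.le hr1.le
        rwa [← Real.rpow_mul hκ, one_div,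
          inv_mul_cancel₀ hr1.ne', Real.rpow_one] at this

      calc κ * y ≤ y ^ (r - 1) * y := mul_le_mul_of_nonneg_right hκy hy
        _ = y ^ r := by
            rw [← Real.rpow_add_one h0.ne' (r-1)] <;> ring_nf
        _ ≤ y ^ r + κ ^ (r / (r - 1)) := by
            have : (0:ℝ) ≤ κ ^ (r / (r - 1)) := Real.rpow_nonneg hκ _
            linarith

/-- Conditional Jensen inequality for `exp`. -/
lemma condexp_exp_jensen' {Ω : Type*} [m0 : MeasurableSpace Ω] (μ : Measure Ω)
    [IsProbabilityMeasure μ] {m : MeasurableSpace Ω} (hm : m ≤ m0) {f : Ω → ℝ}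
    (hf : Integrable f μ) (hef : Integrable (fun ω => Real.exp (f ω)) μ) :
    (fun ω => Real.exp ((μ[f|m]) ω)) ≤ᵐ[μ] μ[fun ω => Real.exp (f ω)|m] := by
  haveI := isFiniteMeasure_trim hm (μ := μ)
  set Z := μ[f|m] with hZ
  have hZm : StronglyMeasurable[m] Z := stronglyMeasurable_condExp
  have hZint : Integrable Z μ := integrable_condExp
  have key : ∀ N : ℕ, ∀ᵐ ω ∂μ, Real.exp (min (Z ω) N) ≤
      (μ[fun ω => Real.exp (f ω)|m]) ω := by
    intro N
    set y : Ω → ℝ := fun ω => min (Z ω) N with hy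
    have hym : StronglyMeasurable[m] y :=
      (hZm.measurable.min measurable_const).stronglyMeasurable
    have heym : StronglyMeasurable[m] (fun ω => Real.exp (y ω)) :=
      (Real.measurable_exp.comp hym.measurable).stronglyMeasurable
    have hybd : ∀ ω, Real.exp (y ω) ≤ Real.exp N :=
      fun ω => Real.exp_le_exp.2 (min_le_right _ _)
    have hypos : ∀ ω, 0 < Real.exp (y ω) := fun ω => Real.exp_pos _
    have hbd1 : ∀ ω, |Real.exp (y ω) * (1 - y ω)| ≤ Real.exp N * (1 + N) + 2 := by
      intro ω
      rcases le_or_gt 0 (y ω) with h | h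
      · have h1 : y ω ≤ N := min_le_right _ _
        rw [abs_mul, abs_of_pos (hypos ω)]
        have : |1 - y ω| ≤ 1 + (N:ℝ) := by
          rw [abs_sub_comm, abs_le]; constructor <;> nlinarith
        nlinarith [hybd ω, hypos ω, Real.exp_nonneg (y ω)]
      · have h1 : Real.exp (y ω) ≤ 1 := Real.exp_le_one_iff.2 h.le
        have h2 : Real.exp (y ω) * (- y ω) ≤ 1 := by
          have := Real.add_one_le_exp (- y ω)
          have h3 : -y ω ≤ Real.exp (-y ω) := by linarith
          calc Real.exp (y ω) * (- y ω) ≤ Real.exp (y ω) * Real.exp (-y ω) :=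
                mul_le_mul_of_nonneg_left h3 (Real.exp_nonneg _)
            _ = 1 := by rw [← Real.exp_add]; simp
        rw [abs_mul, abs_of_pos (hypos ω), abs_of_pos (by linarith : (0:ℝ) < 1 - y ω)]
        have hN : (0:ℝ) ≤ Real.exp N * (1 + N) := by positivity
        nlinarith
    have hint1 : Integrable (fun ω => Real.exp (y ω) * (1 - y ω)) μ := by
      refine Integrable.mono' (integrable_const (Real.exp N * (1 + N) + 2)) ?_
        (Eventually.of_forall hbd1)
      exact (((heym.mono hm)).mul
        (stronglyMeasurable_const.sub (hym.mono hm))).aestronglyMeasurable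
    have hint2 : Integrable ((fun ω => Real.exp (y ω)) * f) μ :=
      hf.bdd_mul (c := Real.exp N) ((heym.mono hm)).aestronglyMeasurable
        (Eventually.of_forall fun ω => by
          rw [Real.norm_eq_abs, abs_of_pos (hypos ω)]; exact hybd ω)
    have htan : ((fun ω => Real.exp (y ω) * (1 - y ω)) + (fun ω => Real.exp (y ω)) * f) ≤ᵐ[μ]
        (fun ω => Real.exp (f ω)) := by
      refine Eventually.of_forall fun ω => ?_
      have h0 := Real.add_one_le_exp (f ω - y ω)
      have h2 : Real.exp (y ω) * (f ω - y ω + 1) ≤ Real.exp (y ω) * Real.exp (f ω - y ω) :=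
        mul_le_mul_of_nonneg_left h0 (Real.exp_nonneg _)
      rw [← Real.exp_add] at h2
      simp only [Pi.add_apply, Pi.mul_apply]
      calc Real.exp (y ω) * (1 - y ω) + Real.exp (y ω) * f ω
          = Real.exp (y ω) * (f ω - y ω + 1) := by ring
        _ ≤ Real.exp (y ω + (f ω - y ω)) := h2
        _ = Real.exp (f ω) := by ring_nf
    have hmono := condExp_mono (m := m) (μ := μ) (hint1.add hint2) hef htan
    have e1 : μ[fun ω => Real.exp (y ω) * (1 - y ω)|m]
        = fun ω => Real.exp (y ω) * (1 - y ω) :=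
      condExp_of_stronglyMeasurable hm
        (heym.mul (stronglyMeasurable_const.sub hym)) hint1
    have e2 : μ[(fun ω => Real.exp (y ω)) * f|m]
        =ᵐ[μ] (fun ω => Real.exp (y ω)) * μ[f|m] :=
      condExp_mul_of_stronglyMeasurable_left heym hint2 hf
    have hadd := condExp_add (μ := μ) (m := m) hint1 hint2
    filter_upwards [hmono, e2, hadd] with ω h1 h2 h3
    have h4 : (μ[(fun ω => Real.exp (y ω) * (1 - y ω)) + (fun ω => Real.exp (y ω)) * f|m]) ω
        = Real.exp (y ω) * (1 - y ω) + Real.exp (y ω) * Z ω := by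
      rw [h3]
      simp only [Pi.add_apply]
      rw [e1, h2]
      simp [hZ]
    rw [h4] at h1
    have hzy : y ω ≤ Z ω := min_le_left _ _
    calc Real.exp (min (Z ω) N) = Real.exp (y ω) * 1 := by rw [mul_one]
      _ ≤ Real.exp (y ω) * (1 - y ω) + Real.exp (y ω) * Z ω := by nlinarith [hypos ω]
      _ ≤ _ := h1
  have key' : ∀ᵐ ω ∂μ, ∀ N : ℕ, Real.exp (min (Z ω) N) ≤
      (μ[fun ω => Real.exp (f ω)|m]) ω := ae_all_iff.2 key
  filter_upwards [key'] with ω hω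
  have := hω (Nat.ceil (Z ω))
  rwa [min_eq_left (Nat.le_ceil _)] at this

/-- The `φ_r`-Orlicz (Luxemburg) norm with threshold 2: `inf{c > 0 : E[exp(|f/c|^r)] ≤ 2}`. -/
noncomputable def orliczNorm {Ω : Type*} [MeasurableSpace Ω] (μ : Measure Ω) (r : ℝ)
    (f : Ω → ℝ) : ℝ :=
  sInf {c : ℝ | 0 < c ∧ ∫ ω, Real.exp ((|f ω| / c) ^ r) ∂μ ≤ 2}

set_option maxHeartbeats 1000000 in
/-- Moment bound for a product of conditionally normalized exponential tilts of a
strictly stationary sub-Weibull (order `r > 1`) sequence: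
`E[M_n^p]^{1/p} ≤ (exp((4pn‖a‖_{φ_r})^{r/(r−1)} b^{1/(r−1)}) + (b/(b−1))·2^{1/b})^{1/p}`. -/
theorem stmt2 {Ω : Type*} [m0 : MeasurableSpace Ω] (μ : Measure Ω) [IsProbabilityMeasure μ]
    (a : ℕ → Ω → ℝ) (hameas : ∀ t, Measurable (a t))
    -- strict stationarity of the sequence
    (hstat : ∀ t : ℕ, Measure.map (fun ω => (fun k => a (k + t) ω : ℕ → ℝ)) μ =
      Measure.map (fun ω => (fun k => a k ω : ℕ → ℝ)) μ)
    (r : ℝ) (hr : 1 < r)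
    (hfin : orliczNorm μ r (a 0) ∈ {c : ℝ | 0 < c ∧ ∫ ω, Real.exp ((|a 0 ω| / c) ^ r) ∂μ ≤ 2})
    (ℱ : ℕ → MeasurableSpace Ω) (hℱ : ∀ t, ℱ t ≤ m0)
    (hint : ∀ t, Integrable (fun ω => Real.exp (a t ω)) μ)
    (M : ℕ → Ω → ℝ)
    (hM : ∀ n ω, M n ω = ∏ t ∈ Finset.Icc 1 n,
      Real.exp (a t ω) / (μ[fun ω' => Real.exp (a t ω')|ℱ t]) ω)
    (p b : ℝ) (hp : 1 < p) (hb : 1 < b) (n : ℕ) :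
    (∫ ω, (M n ω) ^ p ∂μ) ^ (1 / p) ≤
      (Real.exp ((4 * p * n * orliczNorm μ r (a 0)) ^ (r / (r - 1)) * b ^ (1 / (r - 1))) +
        (b / (b - 1)) * (2 : ℝ) ^ (1 / b)) ^ (1 / p) := by
  have hr1 : (0:ℝ) < r - 1 := by linarith
  set c := orliczNorm μ r (a 0) with hc
  obtain ⟨hcpos, hcint⟩ := hfin
  have hb1 : (0:ℝ) < b - 1 := by linarith
  have hp0 : (0:ℝ) < p := by linarith
  -- second RHS term is ≥ 1
  have hq1 : (1:ℝ) ≤ (b / (b - 1)) * (2:ℝ) ^ (1 / b) := by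
    have h1 : (1:ℝ) ≤ b / (b - 1) := (one_le_div hb1).2 (by linarith)
    have h2 : (1:ℝ) ≤ (2:ℝ) ^ (1 / b) := Real.one_le_rpow (by norm_num) (by positivity)
    nlinarith
  -- the case n = 0
  rcases Nat.eq_zero_or_pos n with hn | hn
  · subst hn
    have hM0 : ∀ ω, (M 0 ω) ^ p = 1 := by
      intro ω
      rw [hM]
      simp
    simp only [hM0]
    rw [integral_const]
    simp only [Measure.real, measure_univ, ENNReal.toReal_one, smul_eq_mul, one_mul, mul_one]
    rw [Real.one_rpow]
    apply Real.one_le_rpow _ (by positivity)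
    have : (0:ℝ) ≤ (4 * p * (0:ℕ) * c) ^ (r / (r - 1)) * b ^ (1 / (r - 1)) := by
      positivity
    nlinarith [Real.one_le_exp this]
  -- main case
  have hn0 : (0:ℝ) < (n:ℝ) := by exact_mod_cast hn
  have hn1 : (1:ℝ) ≤ (n:ℝ) := by exact_mod_cast hn
  set lam : ℝ := 2 * p * n with hlam
  have hlam0 : (0:ℝ) < lam := by positivity
  set C' : ℝ := (lam * c) ^ (r / (r - 1)) with hC'
  have hC'0 : (0:ℝ) ≤ C' := Real.rpow_nonneg (by positivity) _
  -- measurability of Orlicz-type integrands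
  have hφmeas : ∀ c' : ℝ, ∀ t, Measurable fun ω => Real.exp ((|a t ω| / c') ^ r) := by
    intro c' t
    exact Real.measurable_exp.comp (((hameas t).abs.div_const c').pow_const r)
  -- integrability of exp((|a 0|/c)^r)
  have hφint : Integrable (fun ω => Real.exp ((|a 0 ω| / c) ^ r)) μ := by
    by_contra hni
    have hmem : ∀ ε : ℝ, 0 < ε → ε ≤ c →
        ε ∈ {c : ℝ | 0 < c ∧ ∫ ω, Real.exp ((|a 0 ω| / c) ^ r) ∂μ ≤ 2} := by
      intro ε hε hεc
      have hnint : ¬ Integrable (fun ω => Real.exp ((|a 0 ω| / ε) ^ r)) μ := by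
        intro hInt
        apply hni
        refine hInt.mono' ((hφmeas c 0).aestronglyMeasurable) (Eventually.of_forall fun ω => ?_)
        rw [Real.norm_eq_abs, abs_of_pos (Real.exp_pos _)]
        apply Real.exp_le_exp.2
        gcongr
      exact ⟨hε, by rw [integral_undef hnint]; norm_num⟩
    have hbdd : BddBelow {c : ℝ | 0 < c ∧ ∫ ω, Real.exp ((|a 0 ω| / c) ^ r) ∂μ ≤ 2} :=
      ⟨0, fun x hx => hx.1.le⟩
    have h2 : c ≤ c / 2 := csInf_le hbdd (hmem (c/2) (by linarith) (by linarith))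
    linarith
  -- Young-type exponential bound
  have hexp_bound : ∀ κ : ℝ, 0 ≤ κ → ∀ x : ℝ,
      Real.exp (κ * |x|) ≤ Real.exp ((κ * c) ^ (r / (r - 1))) * Real.exp ((|x| / c) ^ r) := by
    intro κ hκ x
    rw [← Real.exp_add]
    apply Real.exp_le_exp.2
    have hY := young_pt' (mul_nonneg hκ hcpos.le) hr (div_nonneg (abs_nonneg x) hcpos.le)
    have hxy : κ * c * (|x| / c) = κ * |x| := by field_simp
    rw [hxy] at hY
    linarith
  -- integrability of exp(lam |a 0|)
  have hE0 : Integrable (fun ω => Real.exp (lam * |a 0 ω|)) μ := by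
    refine (hφint.const_mul (Real.exp ((lam * c) ^ (r / (r - 1))))).mono'
      (Real.measurable_exp.comp ((hameas 0).abs.const_mul lam)).aestronglyMeasurable
      (Eventually.of_forall fun ω => ?_)
    rw [Real.norm_eq_abs, abs_of_pos (Real.exp_pos _)]
    exact hexp_bound lam hlam0.le (a 0 ω)
  -- equality of marginal laws
  have hlaw : ∀ t, Measure.map (a t) μ = Measure.map (a 0) μ := by
    intro t
    have hmF : Measurable (fun ω => (fun k => a (k + t) ω : ℕ → ℝ)) :=
      measurable_pi_lambda _ (fun k => hameas (k + t))
    have hmF0 : Measurable (fun ω => (fun k => a k ω : ℕ → ℝ)) :=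
      measurable_pi_lambda _ (fun k => hameas k)
    have h1 := congrArg (Measure.map (fun x : ℕ → ℝ => x 0)) (hstat t)
    rw [Measure.map_map (measurable_pi_apply 0) hmF,
        Measure.map_map (measurable_pi_apply 0) hmF0] at h1
    have e1 : ((fun x : ℕ → ℝ => x 0) ∘ (fun ω => (fun k => a (k + t) ω : ℕ → ℝ))) = a t := by
      funext ω; simp
    have e2 : ((fun x : ℕ → ℝ => x 0) ∘ (fun ω => (fun k => a k ω : ℕ → ℝ))) = a 0 := rfl
    rwa [e1, e2] at h1
  -- transfer of integrals and integrability along the law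
  have htransfer : ∀ (t : ℕ) (G : ℝ → ℝ), Measurable G →
      ∫ ω, G (a t ω) ∂μ = ∫ ω, G (a 0 ω) ∂μ := by
    intro t G hG
    rw [← integral_map (hameas t).aemeasurable hG.aestronglyMeasurable,
        ← integral_map (hameas 0).aemeasurable hG.aestronglyMeasurable, hlaw t]
  have htransferInt : ∀ (t : ℕ) (G : ℝ → ℝ), Measurable G →
      Integrable (fun ω => G (a 0 ω)) μ → Integrable (fun ω => G (a t ω)) μ := by
    intro t G hG h0
    have h1 : Integrable G (Measure.map (a 0) μ) :=
      (integrable_map_measure hG.aestronglyMeasurable (hameas 0).aemeasurable).2 h0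
    rw [← hlaw t] at h1
    exact (integrable_map_measure hG.aestronglyMeasurable (hameas t).aemeasurable).1 h1
  have hGmeas : Measurable (fun x : ℝ => Real.exp (lam * |x|)) :=
    Real.measurable_exp.comp (measurable_abs.const_mul lam)
  have hEt : ∀ t, Integrable (fun ω => Real.exp (lam * |a t ω|)) μ := fun t =>
    htransferInt t _ hGmeas hE0
  have hAt : ∀ t, Integrable (a t) μ := by
    intro t
    refine (hEt t).mono' (hameas t).aestronglyMeasurable (Eventually.of_forall fun ω => ?_)
    rw [Real.norm_eq_abs]
    have hlam1 : (1:ℝ) ≤ lam := by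
      rw [hlam]; nlinarith [hn1, hp]
    calc |a t ω| ≤ Real.exp |a t ω| := by nlinarith [Real.add_one_le_exp |a t ω|]
      _ ≤ Real.exp (lam * |a t ω|) :=
          Real.exp_le_exp.2 (by nlinarith [abs_nonneg (a t ω)])
  have habs : ∀ t, Integrable (fun ω => |a t ω|) μ := fun t => (hAt t).abs
  -- factorwise bound involving the conditional expectation
  have hfact : ∀ t : ℕ, ∀ᵐ ω ∂μ,
      Real.exp (a t ω) / (μ[fun ω' => Real.exp (a t ω')|ℱ t]) ω
        ≤ Real.exp (|a t ω| + (μ[(fun ω' => |a t ω'|)|ℱ t]) ω)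
      ∧ 0 < (μ[fun ω' => Real.exp (a t ω')|ℱ t]) ω := by
    intro t
    haveI := isFiniteMeasure_trim (hℱ t) (μ := μ)
    have h1 : (fun ω => Real.exp ((μ[a t|ℱ t]) ω)) ≤ᵐ[μ]
        μ[fun ω => Real.exp (a t ω)|ℱ t] :=
      condexp_exp_jensen' μ (hℱ t) (hAt t) (hint t)
    have h2 : μ[(fun ω => -|a t ω|)|ℱ t] ≤ᵐ[μ] μ[a t|ℱ t] :=
      condExp_mono (habs t).neg (hAt t) (Eventually.of_forall fun ω => neg_abs_le _)
    have h3 : μ[(fun ω => -|a t ω|)|ℱ t] =ᵐ[μ]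
        fun ω => -((μ[(fun ω' => |a t ω'|)|ℱ t]) ω) := by
      have h := condExp_neg (m := ℱ t) (μ := μ) (fun ω => |a t ω|)
      exact h
    filter_upwards [h1, h2, h3] with ω h1ω h2ω h3ω
    rw [h3ω] at h2ω
    have hge : Real.exp (-((μ[(fun ω' => |a t ω'|)|ℱ t]) ω))
        ≤ (μ[fun ω' => Real.exp (a t ω')|ℱ t]) ω := by
      calc Real.exp (-((μ[(fun ω' => |a t ω'|)|ℱ t]) ω))
          ≤ Real.exp ((μ[a t|ℱ t]) ω) := Real.exp_le_exp.2 h2ω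
        _ ≤ _ := h1ω
    have hgpos : 0 < (μ[fun ω' => Real.exp (a t ω')|ℱ t]) ω :=
      lt_of_lt_of_le (Real.exp_pos _) hge
    refine ⟨?_, hgpos⟩
    rw [div_le_iff₀ hgpos]
    calc Real.exp (a t ω) ≤ Real.exp |a t ω| := Real.exp_le_exp.2 (le_abs_self _)
      _ = Real.exp (|a t ω| + (μ[(fun ω' => |a t ω'|)|ℱ t]) ω) *
          Real.exp (-((μ[(fun ω' => |a t ω'|)|ℱ t]) ω)) := by rw [← Real.exp_add]; ring_nf
      _ ≤ _ := mul_le_mul_of_nonneg_left hge (Real.exp_nonneg _)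
  -- conditional Jensen for exp(lam Z)
  have hZj : ∀ t : ℕ, ∀ᵐ ω ∂μ, Real.exp (lam * (μ[(fun ω' => |a t ω'|)|ℱ t]) ω)
      ≤ (μ[fun ω' => Real.exp (lam * |a t ω'|)|ℱ t]) ω := by
    intro t
    haveI := isFiniteMeasure_trim (hℱ t) (μ := μ)
    have hj := condexp_exp_jensen' μ (hℱ t) ((habs t).const_mul lam) (hEt t)
    have hsmul : μ[(fun ω' => lam * |a t ω'|)|ℱ t] =ᵐ[μ]
        fun ω => lam * ((μ[(fun ω' => |a t ω'|)|ℱ t]) ω) := by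
      have h := condExp_smul (m := ℱ t) (μ := μ) lam (fun ω' => |a t ω'|)
      exact h
    filter_upwards [hj, hsmul] with ω h1ω h2ω
    rw [h2ω] at h1ω
    exact h1ω
  have heZint : ∀ t, Integrable
      (fun ω => Real.exp (lam * (μ[(fun ω' => |a t ω'|)|ℱ t]) ω)) μ := by
    intro t
    haveI := isFiniteMeasure_trim (hℱ t) (μ := μ)
    refine Integrable.mono'
      (integrable_condExp (f := fun ω' => Real.exp (lam * |a t ω'|)) (m := ℱ t)) ?_ ?_
    · exact (Real.measurable_exp.comp
        (((stronglyMeasurable_condExp.mono (hℱ t)).measurable.const_mul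
          lam))).aestronglyMeasurable
    · filter_upwards [hZj t] with ω hω
      rw [Real.norm_eq_abs, abs_of_pos (Real.exp_pos _)]
      exact hω
  have hZle : ∀ t, ∫ ω, Real.exp (lam * (μ[(fun ω' => |a t ω'|)|ℱ t]) ω) ∂μ
      ≤ ∫ ω, Real.exp (lam * |a t ω|) ∂μ := by
    intro t
    haveI := isFiniteMeasure_trim (hℱ t) (μ := μ)
    calc ∫ ω, Real.exp (lam * (μ[(fun ω' => |a t ω'|)|ℱ t]) ω) ∂μ
        ≤ ∫ ω, (μ[fun ω' => Real.exp (lam * |a t ω'|)|ℱ t]) ω ∂μ :=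
          integral_mono_of_nonneg (Eventually.of_forall fun ω => Real.exp_nonneg _)
            integrable_condExp (hZj t)
      _ = ∫ ω, Real.exp (lam * |a t ω|) ∂μ := integral_condExp (hℱ t)
  -- per-t bound on ∫ exp(lam |a t|)
  have hint_t : ∀ t, ∫ ω, Real.exp (lam * |a t ω|) ∂μ ≤ 2 * Real.exp C' := by
    intro t
    rw [htransfer t _ hGmeas]
    have h1 : ∫ ω, Real.exp (lam * |a 0 ω|) ∂μ
        ≤ ∫ ω, Real.exp C' * Real.exp ((|a 0 ω| / c) ^ r) ∂μ :=
      integral_mono hE0 (hφint.const_mul _) (fun ω => hexp_bound lam hlam0.le (a 0 ω))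
    rw [integral_const_mul] at h1
    nlinarith [Real.exp_pos C', hcint,
      integral_nonneg (f := fun ω => Real.exp ((|a 0 ω| / c) ^ r)) (fun ω => Real.exp_nonneg ((|a 0 ω| / c) ^ r)) (μ := μ)]
  -- elementary AM-GM on exponentials
  have hterm2 : ∀ u v : ℝ, Real.exp (p * n * (u + v)) ≤
      (Real.exp (lam * u) + Real.exp (lam * v)) / 2 := by
    intro u v
    have h1 : Real.exp (p * ↑n * (u + v)) = Real.exp (p * ↑n * u) * Real.exp (p * ↑n * v) := by
      rw [← Real.exp_add]; ring_nf
    have h2 := two_mul_le_add_sq (Real.exp (p * ↑n * u)) (Real.exp (p * ↑n * v))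
    have h3 : Real.exp (p * ↑n * u) ^ 2 = Real.exp (lam * u) := by
      rw [sq, ← Real.exp_add, hlam]; ring_nf
    have h4 : Real.exp (p * ↑n * v) ^ 2 = Real.exp (lam * v) := by
      rw [sq, ← Real.exp_add, hlam]; ring_nf
    nlinarith [h1, h2, h3, h4]
  -- master pointwise bound
  have hmaster : ∀ᵐ ω ∂μ, 0 ≤ (M n ω) ^ p ∧ (M n ω) ^ p ≤
      ∑ t ∈ Finset.Icc 1 n, (1 / (n:ℝ)) *
        ((Real.exp (lam * |a t ω|) +
          Real.exp (lam * (μ[(fun ω' => |a t ω'|)|ℱ t]) ω)) / 2) := by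
    have hall : ∀ᵐ ω ∂μ, ∀ t ∈ Finset.Icc 1 n,
        (Real.exp (a t ω) / (μ[fun ω' => Real.exp (a t ω')|ℱ t]) ω
          ≤ Real.exp (|a t ω| + (μ[(fun ω' => |a t ω'|)|ℱ t]) ω)
        ∧ 0 < (μ[fun ω' => Real.exp (a t ω')|ℱ t]) ω) :=
      (eventually_all_finset _).2 (fun t _ => hfact t)
    filter_upwards [hall] with ω hω
    have hMnn : 0 ≤ M n ω := by
      rw [hM]
      exact Finset.prod_nonneg fun t ht => div_nonneg (Real.exp_nonneg _) (hω t ht).2.le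
    have hMle : M n ω ≤ Real.exp (∑ t ∈ Finset.Icc 1 n,
        (|a t ω| + (μ[(fun ω' => |a t ω'|)|ℱ t]) ω)) := by
      rw [hM, Real.exp_sum]
      exact Finset.prod_le_prod (fun t ht => div_nonneg (Real.exp_nonneg _) (hω t ht).2.le)
        (fun t ht => (hω t ht).1)
    refine ⟨Real.rpow_nonneg hMnn p, ?_⟩
    have h1 : (M n ω) ^ p ≤ Real.exp (p * ∑ t ∈ Finset.Icc 1 n,
        (|a t ω| + (μ[(fun ω' => |a t ω'|)|ℱ t]) ω)) := by
      calc (M n ω) ^ p ≤ (Real.exp (∑ t ∈ Finset.Icc 1 n,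
            (|a t ω| + (μ[(fun ω' => |a t ω'|)|ℱ t]) ω))) ^ p :=
            Real.rpow_le_rpow hMnn hMle hp0.le
        _ = Real.exp ((∑ t ∈ Finset.Icc 1 n,
            (|a t ω| + (μ[(fun ω' => |a t ω'|)|ℱ t]) ω)) * p) := (Real.exp_mul _ p).symm
        _ = _ := by rw [mul_comm]
    have hw : ∑ _t ∈ Finset.Icc 1 n, (1 / (n:ℝ)) = 1 := by
      rw [Finset.sum_const, Nat.card_Icc]
      simp only [Nat.add_sub_cancel, nsmul_eq_mul]
      field_simp
    have hJ := convexOn_exp.map_sum_le (t := Finset.Icc 1 n) (w := fun _ => 1 / (n:ℝ))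
      (p := fun t => p * ↑n * (|a t ω| + (μ[(fun ω' => |a t ω'|)|ℱ t]) ω))
      (fun _ _ => by positivity) hw (fun _ _ => Set.mem_univ _)
    have harg : ∑ t ∈ Finset.Icc 1 n, (1 / (n:ℝ)) •
        (p * ↑n * (|a t ω| + (μ[(fun ω' => |a t ω'|)|ℱ t]) ω))
        = p * ∑ t ∈ Finset.Icc 1 n, (|a t ω| + (μ[(fun ω' => |a t ω'|)|ℱ t]) ω) := by
      rw [Finset.mul_sum]
      refine Finset.sum_congr rfl fun t ht => ?_
      rw [smul_eq_mul]
      field_simp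
    rw [harg] at hJ
    calc (M n ω) ^ p ≤ Real.exp (p * ∑ t ∈ Finset.Icc 1 n,
          (|a t ω| + (μ[(fun ω' => |a t ω'|)|ℱ t]) ω)) := h1
      _ ≤ ∑ t ∈ Finset.Icc 1 n, (1 / (n:ℝ)) •
            Real.exp (p * ↑n * (|a t ω| + (μ[(fun ω' => |a t ω'|)|ℱ t]) ω)) := hJ
      _ ≤ _ := by
          refine Finset.sum_le_sum fun t ht => ?_
          rw [smul_eq_mul]
          exact mul_le_mul_of_nonneg_left (hterm2 _ _) (by positivity)
  -- integrate the master bound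
  have hIle : ∫ ω, (M n ω) ^ p ∂μ ≤ 2 * Real.exp C' := by
    have hRi : ∀ t ∈ Finset.Icc 1 n, Integrable (fun ω => (1 / (n:ℝ)) *
        ((Real.exp (lam * |a t ω|) +
          Real.exp (lam * (μ[(fun ω' => |a t ω'|)|ℱ t]) ω)) / 2)) μ :=
      fun t _ => (((hEt t).add (heZint t)).div_const 2).const_mul _
    have h1 : ∫ ω, (M n ω) ^ p ∂μ ≤ ∫ ω, ∑ t ∈ Finset.Icc 1 n, (1 / (n:ℝ)) *
        ((Real.exp (lam * |a t ω|) +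
          Real.exp (lam * (μ[(fun ω' => |a t ω'|)|ℱ t]) ω)) / 2) ∂μ :=
      integral_mono_of_nonneg (by filter_upwards [hmaster] with ω h; exact h.1)
        (integrable_finset_sum _ hRi)
        (by filter_upwards [hmaster] with ω h; exact h.2)
    rw [integral_finset_sum _ hRi] at h1
    have h2 : ∀ t ∈ Finset.Icc 1 n, ∫ ω, (1 / (n:ℝ)) *
        ((Real.exp (lam * |a t ω|) +
          Real.exp (lam * (μ[(fun ω' => |a t ω'|)|ℱ t]) ω)) / 2) ∂μ
        ≤ (1 / (n:ℝ)) * (2 * Real.exp C') := by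
      intro t _
      rw [integral_const_mul]
      have h3 : ∫ ω, (Real.exp (lam * |a t ω|) +
          Real.exp (lam * (μ[(fun ω' => |a t ω'|)|ℱ t]) ω)) / 2 ∂μ
          = ((∫ ω, Real.exp (lam * |a t ω|) ∂μ) +
            ∫ ω, Real.exp (lam * (μ[(fun ω' => |a t ω'|)|ℱ t]) ω) ∂μ) / 2 := by
        rw [integral_div, integral_add (hEt t) (heZint t)]
      rw [h3]
      have h4 := hZle t
      have h5 := hint_t t
      have hninv : (0:ℝ) < 1 / (n:ℝ) := by positivity
      have : ((∫ ω, Real.exp (lam * |a t ω|) ∂μ) +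
          ∫ ω, Real.exp (lam * (μ[(fun ω' => |a t ω'|)|ℱ t]) ω) ∂μ) / 2
          ≤ 2 * Real.exp C' := by linarith
      exact mul_le_mul_of_nonneg_left this hninv.le
    have h6 : ∑ t ∈ Finset.Icc 1 n, (1 / (n:ℝ)) * (2 * Real.exp C') = 2 * Real.exp C' := by
      rw [Finset.sum_const, Nat.card_Icc]
      simp only [Nat.add_sub_cancel, nsmul_eq_mul]
      field_simp
    calc ∫ ω, (M n ω) ^ p ∂μ ≤ _ := h1
      _ ≤ ∑ t ∈ Finset.Icc 1 n, (1 / (n:ℝ)) * (2 * Real.exp C') := Finset.sum_le_sum h2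
      _ = 2 * Real.exp C' := h6
  -- final elementary comparison
  have hfinal : ∫ ω, (M n ω) ^ p ∂μ ≤
      Real.exp ((4 * p * ↑n * c) ^ (r / (r - 1)) * b ^ (1 / (r - 1))) +
        (b / (b - 1)) * (2:ℝ) ^ (1 / b) := by
    have hKe : 2 * C' ≤ (4 * p * ↑n * c) ^ (r / (r - 1)) * b ^ (1 / (r - 1)) := by
      have h40 : (4 * p * ↑n * c) = 2 * (lam * c) := by rw [hlam]; ring
      rw [h40, Real.mul_rpow (by norm_num) (by positivity)]
      have h2r : (2:ℝ) ≤ (2:ℝ) ^ (r / (r - 1)) := by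
        calc (2:ℝ) = 2 ^ (1:ℝ) := (Real.rpow_one 2).symm
          _ ≤ 2 ^ (r / (r - 1)) := Real.rpow_le_rpow_of_exponent_le (by norm_num)
              ((one_le_div hr1).2 (by linarith))
      have hb1' : (1:ℝ) ≤ b ^ (1 / (r - 1)) := Real.one_le_rpow hb.le (by positivity)
      have h2rnn : (0:ℝ) ≤ (2:ℝ) ^ (r / (r - 1)) := by positivity
      have s1 : 2 * C' ≤ (2:ℝ) ^ (r / (r - 1)) * C' := mul_le_mul_of_nonneg_right h2r hC'0
      have s2 : (2:ℝ) ^ (r / (r - 1)) * C' ≤ (2:ℝ) ^ (r / (r - 1)) * C' * b ^ (1 / (r - 1)) :=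
        le_mul_of_one_le_right (by positivity) hb1'
      calc 2 * C' ≤ (2:ℝ) ^ (r / (r - 1)) * C' := s1
        _ ≤ (2:ℝ) ^ (r / (r - 1)) * C' * b ^ (1 / (r - 1)) := s2
        _ = (2:ℝ) ^ (r / (r - 1)) * (lam * c) ^ (r / (r - 1)) * b ^ (1 / (r - 1)) := by
            rw [hC']
    have he2 : Real.exp (2 * C') = Real.exp C' * Real.exp C' := by
      rw [← Real.exp_add]; ring_nf
    have h5 : 2 * Real.exp C' ≤ Real.exp (2 * C') + 1 := by
      nlinarith [sq_nonneg (Real.exp C' - 1)]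
    calc ∫ ω, (M n ω) ^ p ∂μ ≤ 2 * Real.exp C' := hIle
      _ ≤ Real.exp (2 * C') + 1 := h5
      _ ≤ _ := by
          have := Real.exp_le_exp.2 hKe
          linarith
  exact Real.rpow_le_rpow
    (integral_nonneg_of_ae (by filter_upwards [hmaster] with ω h; exact h.1))
    hfinal (by positivity)
end

section
/- Let ℰ be an ordered Banach function space and T : ℰ → ℰ a convex operator, meaning T(τf + (1−τ)g) ≤ τTf + (1−τ)Tg for all f, g ∈ ℰ and τ ∈ [0,1]. Suppose at each fixed point v of T there exists a monotone bounded linear subgradient D_v (i.e., Tg − Tv ≥ D_v(g − v) for all g) with spectral radius ρ(D_v; ℰ) < 1. Then T has at most one fixed point in ℰ. -/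
open Ring Filter Topology
set_option synthInstance.maxHeartbeats 1000000
set_option maxHeartbeats 1600000

section Aux

variable {E : Type*} [NormedAddCommGroup E] [Lattice E] [HasSolidNorm E]
    [IsOrderedAddMonoid E] [NormedSpace ℝ E] [CompleteSpace E]

omit [CompleteSpace E] in
/-- nonnegative real scalars preserve positivity in a Banach lattice with continuous smul -/
lemma aux_real_smul_nonneg {t : ℝ} (ht : 0 ≤ t) {y : E} (hy : 0 ≤ y) : 0 ≤ t • y := by
  have h2 : ∀ (k : ℕ) (z : E), 0 ≤ (2 ^ k) • z → 0 ≤ z := by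
    intro k
    induction k with
    | zero => intro z hz; simpa using hz
    | succ k ih =>
      intro z hz
      have h : (2 ^ (k + 1)) • z = (2 ^ k) • (2 • z) := by
        rw [← mul_nsmul]; ring_nf
      exact nsmul_two_semiclosed (ih _ (h ▸ hz))
  have hdy : ∀ m k : ℕ, 0 ≤ ((m : ℝ) / 2 ^ k) • y := by
    intro m k
    apply h2 k
    have h : (2 ^ k) • (((m : ℝ) / 2 ^ k) • y) = m • y := by
      rw [← Nat.cast_smul_eq_nsmul ℝ, smul_smul, ← Nat.cast_smul_eq_nsmul ℝ m y]
      congr 1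
      push_cast
      field_simp
    rw [h]
    exact nsmul_nonneg hy m
  have htd : Tendsto (fun n : ℕ => ((⌊t * 2 ^ n⌋₊ : ℝ) / 2 ^ n)) atTop (𝓝 t) := by
    have hub : ∀ n : ℕ, ((⌊t * 2 ^ n⌋₊ : ℝ) / 2 ^ n) ≤ t := by
      intro n
      rw [div_le_iff₀ (by positivity)]
      exact Nat.floor_le (by positivity)
    have hlb : ∀ n : ℕ, t - (2 : ℝ)⁻¹ ^ n ≤ ((⌊t * 2 ^ n⌋₊ : ℝ) / 2 ^ n) := by
      intro n
      rw [sub_le_iff_le_add, inv_pow, inv_eq_one_div, ← add_div,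
        le_div_iff₀ (by positivity)]
      exact (Nat.lt_floor_add_one _).le
    have hg : Tendsto (fun n : ℕ => t - (2 : ℝ)⁻¹ ^ n) atTop (𝓝 t) := by
      have := tendsto_pow_atTop_nhds_zero_of_lt_one (by norm_num : (0:ℝ) ≤ 2⁻¹)
        (by norm_num : (2:ℝ)⁻¹ < 1)
      simpa using tendsto_const_nhds.sub this
    exact tendsto_of_tendsto_of_tendsto_of_le_of_le hg tendsto_const_nhds hlb hub
  have hfin : Tendsto (fun n : ℕ => ((⌊t * 2 ^ n⌋₊ : ℝ) / 2 ^ n) • y) atTop (𝓝 (t • y)) :=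
    htd.smul_const y
  exact ge_of_tendsto' hfin fun n => hdy _ n

end Aux

section More

variable {E : Type*} [NormedAddCommGroup E] [Lattice E] [HasSolidNorm E]
    [IsOrderedAddMonoid E] [NormedSpace ℝ E] [CompleteSpace E]

omit [CompleteSpace E] in
lemma aux_pos_pow (s : E →L[ℝ] E) (hs : ∀ x, 0 ≤ x → 0 ≤ s x) (n : ℕ) :
    ∀ x : E, 0 ≤ x → 0 ≤ (s ^ n) x := by
  induction n with
  | zero => intro x hx; simpa using hx
  | succ n ih => intro x hx; rw [pow_succ, ContinuousLinearMap.mul_apply]; exact ih _ (hs _ hx)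

lemma aux_pos_inv_one_sub (s : E →L[ℝ] E) (hs : ∀ x, 0 ≤ x → 0 ≤ s x) (hn : ‖s‖ < 1) :
    ∀ x : E, 0 ≤ x → 0 ≤ Ring.inverse (1 - s) x := by
  intro x hx
  rw [← geom_series_eq_inverse s hn]
  have hsum : Summable fun n : ℕ => s ^ n := summable_geometric_of_norm_lt_one hn
  have hmap : (∑' n : ℕ, s ^ n) x = ∑' n : ℕ, (s ^ n) x :=
    (ContinuousLinearMap.apply ℝ E x).map_tsum hsum
  rw [hmap]
  exact tsum_nonneg fun n => aux_pos_pow s hs n x hx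

/-- one step of downward propagation of resolvent positivity -/
lemma aux_step (D : E →L[ℝ] E) {c μ : ℝ} (hμc : μ ≤ c)
    (hc : IsUnit (algebraMap ℝ (E →L[ℝ] E) c - D))
    (hpos : ∀ x : E, 0 ≤ x → 0 ≤ Ring.inverse (algebraMap ℝ (E →L[ℝ] E) c - D) x)
    (hsm : (c - μ) * ‖Ring.inverse (algebraMap ℝ (E →L[ℝ] E) c - D)‖ < 1) :
    ∀ x : E, 0 ≤ x → 0 ≤ Ring.inverse (algebraMap ℝ (E →L[ℝ] E) μ - D) x := by
  intro x hx
  set R : E →L[ℝ] E := Ring.inverse (algebraMap ℝ (E →L[ℝ] E) c - D) with hR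
  set s : E →L[ℝ] E := (c - μ) • R with hs_def
  have hsnorm : ‖s‖ < 1 := by
    rw [hs_def, norm_smul (c - μ) R, Real.norm_eq_abs, abs_of_nonneg (by linarith : (0:ℝ) ≤ c - μ)]
    exact hsm
  have hcu : (algebraMap ℝ (E →L[ℝ] E) c - D) * R = 1 := Ring.mul_inverse_cancel _ hc
  have hRu : R * (algebraMap ℝ (E →L[ℝ] E) c - D) = 1 := Ring.inverse_mul_cancel _ hc
  have hkey : algebraMap ℝ (E →L[ℝ] E) μ - D
      = (algebraMap ℝ (E →L[ℝ] E) c - D) * (1 - s) := by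
    rw [mul_sub, mul_one, hs_def, mul_smul_comm, hcu]
    rw [Algebra.algebraMap_eq_smul_one, Algebra.algebraMap_eq_smul_one, sub_smul]
    abel
  have hcomm : Commute (algebraMap ℝ (E →L[ℝ] E) c - D) (1 - s) := by
    have h1 : Commute (algebraMap ℝ (E →L[ℝ] E) c - D) R := by
      unfold Commute SemiconjBy
      rw [hcu, hRu]
    exact (Commute.one_right _).sub_right (h1.smul_right _)
  have hinv : Ring.inverse (algebraMap ℝ (E →L[ℝ] E) μ - D)
      = Ring.inverse (1 - s) * R := by
    rw [hkey, Ring.mul_inverse_rev' hcomm, hR]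
  rw [hinv, ContinuousLinearMap.mul_apply]
  have hspos : ∀ y : E, 0 ≤ y → 0 ≤ s y := by
    intro y hy
    rw [hs_def, ContinuousLinearMap.smul_apply]
    exact aux_real_smul_nonneg (by linarith) (hpos y hy)
  exact aux_pos_inv_one_sub s hspos hsnorm _ (hpos x hx)

/-- base case: positivity of the resolvent at `‖D‖ + 2` -/
lemma aux_base (D : E →L[ℝ] E) (hD : ∀ x : E, 0 ≤ x → 0 ≤ D x) :
    ∀ x : E, 0 ≤ x → 0 ≤ Ring.inverse (algebraMap ℝ (E →L[ℝ] E) (‖D‖ + 2) - D) x := by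
  intro x hx
  set B : ℝ := ‖D‖ + 2 with hB
  have hB0 : 0 < B := by positivity
  set s : E →L[ℝ] E := B⁻¹ • D with hs_def
  have hsnorm : ‖s‖ < 1 := by
    rw [hs_def, norm_smul B⁻¹ D, Real.norm_eq_abs, abs_of_nonneg (by positivity : (0:ℝ) ≤ B⁻¹)]
    rw [inv_mul_lt_iff₀ hB0, mul_one]
    simp only [hB]
    linarith
  have hkey : algebraMap ℝ (E →L[ℝ] E) B - D = (1 - s) * algebraMap ℝ (E →L[ℝ] E) B := by
    rw [sub_mul, one_mul, hs_def, smul_mul_assoc]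
    congr 1
    rw [Algebra.algebraMap_eq_smul_one, mul_smul_comm, mul_one, smul_smul,
      inv_mul_cancel₀ hB0.ne', one_smul]
  have hBunit : (algebraMap ℝ (E →L[ℝ] E) B) * (algebraMap ℝ (E →L[ℝ] E) B⁻¹) = 1 := by
    rw [← map_mul, mul_inv_cancel₀ hB0.ne', map_one]
  have hBunit' : (algebraMap ℝ (E →L[ℝ] E) B⁻¹) * (algebraMap ℝ (E →L[ℝ] E) B) = 1 := by
    rw [← map_mul, inv_mul_cancel₀ hB0.ne', map_one]
  have hBinv : Ring.inverse (algebraMap ℝ (E →L[ℝ] E) B)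
      = algebraMap ℝ (E →L[ℝ] E) B⁻¹ := by
    have : Ring.inverse ((⟨algebraMap ℝ (E →L[ℝ] E) B, algebraMap ℝ (E →L[ℝ] E) B⁻¹,
        hBunit, hBunit'⟩ : (E →L[ℝ] E)ˣ) : E →L[ℝ] E)
        = _ := Ring.inverse_unit _
    simpa using this
  have hcomm : Commute (1 - s) (algebraMap ℝ (E →L[ℝ] E) B) :=
    (Algebra.commute_algebraMap_right _ _)
  have hinv : Ring.inverse (algebraMap ℝ (E →L[ℝ] E) B - D)
      = algebraMap ℝ (E →L[ℝ] E) B⁻¹ * Ring.inverse (1 - s) := by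
    rw [hkey, Ring.mul_inverse_rev' hcomm, hBinv]
  rw [hinv, ContinuousLinearMap.mul_apply]
  have hspos : ∀ y : E, 0 ≤ y → 0 ≤ s y := by
    intro y hy
    rw [hs_def, ContinuousLinearMap.smul_apply]
    exact aux_real_smul_nonneg (by positivity) (hD y hy)
  have h1 : 0 ≤ Ring.inverse (1 - s) x := aux_pos_inv_one_sub s hspos hsnorm x hx
  rw [Algebra.algebraMap_eq_smul_one, ContinuousLinearMap.smul_apply,
    ContinuousLinearMap.one_apply]
  exact aux_real_smul_nonneg (by positivity) h1

end More

section Main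

variable {E : Type*} [NormedAddCommGroup E] [Lattice E] [HasSolidNorm E]
    [IsOrderedAddMonoid E] [NormedSpace ℝ E] [CompleteSpace E]

lemma aux_resolvent_pos (D : E →L[ℝ] E) (hD : ∀ x : E, 0 ≤ x → 0 ≤ D x)
    (hu : ∀ c : ℝ, 1 ≤ c → IsUnit (algebraMap ℝ (E →L[ℝ] E) c - D)) :
    ∀ x : E, 0 ≤ x → 0 ≤ Ring.inverse (1 - D) x := by
  set B : ℝ := ‖D‖ + 2 with hB
  have hB1 : (1:ℝ) ≤ B := by
    have := norm_nonneg D; simp only [hB]; linarith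
  set S : Set ℝ := {c | 1 ≤ c ∧ c ≤ B ∧
    ∀ x : E, 0 ≤ x → 0 ≤ Ring.inverse (algebraMap ℝ (E →L[ℝ] E) c - D) x} with hS
  have hBS : B ∈ S := ⟨hB1, le_refl _, aux_base D hD⟩
  have hne : S.Nonempty := ⟨B, hBS⟩
  have hbdd : BddBelow S := ⟨1, fun c hc => hc.1⟩
  set c₀ : ℝ := sInf S with hc0
  have hc01 : 1 ≤ c₀ := le_csInf hne fun c hc => hc.1
  have hc0B : c₀ ≤ B := csInf_le hbdd hBS
  have hcont : ∀ x : E, ContinuousAt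
      (fun c : ℝ => Ring.inverse (algebraMap ℝ (E →L[ℝ] E) c - D) x) c₀ := by
    intro x
    have h1 : ContinuousAt (fun c : ℝ => algebraMap ℝ (E →L[ℝ] E) c - D) c₀ :=
      ((continuous_algebraMap ℝ (E →L[ℝ] E)).continuousAt).sub continuousAt_const
    obtain ⟨w, hw⟩ := hu c₀ hc01
    have h2 : ContinuousAt Ring.inverse (algebraMap ℝ (E →L[ℝ] E) c₀ - D) := by
      rw [← hw]; exact NormedRing.inverse_continuousAt w
    have h3 : ContinuousAt (fun c : ℝ => Ring.inverse (algebraMap ℝ (E →L[ℝ] E) c - D)) c₀ :=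
      ContinuousAt.comp (g := Ring.inverse)
        (f := fun c : ℝ => algebraMap ℝ (E →L[ℝ] E) c - D) h2 h1
    exact ContinuousAt.comp (g := fun f : E →L[ℝ] E => f x)
      ((ContinuousLinearMap.apply ℝ E x).continuous.continuousAt) h3
  have hc0pos : ∀ x : E, 0 ≤ x →
      0 ≤ Ring.inverse (algebraMap ℝ (E →L[ℝ] E) c₀ - D) x := by
    intro x hx
    have hcl : c₀ ∈ _root_.closure S := csInf_mem_closure hne hbdd
    have hnb : (𝓝[S] c₀).NeBot := mem_closure_iff_nhdsWithin_neBot.mp hcl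
    have htt : Tendsto (fun c : ℝ => Ring.inverse (algebraMap ℝ (E →L[ℝ] E) c - D) x)
        (𝓝[S] c₀) (𝓝 (Ring.inverse (algebraMap ℝ (E →L[ℝ] E) c₀ - D) x)) :=
      ((hcont x).continuousWithinAt)
    exact ge_of_tendsto htt (eventually_nhdsWithin_of_forall fun c hc => hc.2.2 x hx)
  have hc0eq : c₀ = 1 := by
    by_contra hne1
    have hlt : 1 < c₀ := lt_of_le_of_ne hc01 (Ne.symm hne1)
    set M : ℝ := ‖Ring.inverse (algebraMap ℝ (E →L[ℝ] E) c₀ - D)‖ + 1 with hM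
    have hMR : ‖Ring.inverse (algebraMap ℝ (E →L[ℝ] E) c₀ - D)‖ + 1 = M := rfl
    have hR0 : 0 ≤ ‖Ring.inverse (algebraMap ℝ (E →L[ℝ] E) c₀ - D)‖ := norm_nonneg _
    have hM0 : (0:ℝ) < M := by linarith
    have hM0' : (0:ℝ) < 1/(2*M) := by positivity
    set μ : ℝ := max 1 (c₀ - 1/(2*M)) with hμ
    have hμ1 : 1 ≤ μ := le_max_left _ _
    have hμlt : μ < c₀ := max_lt hlt (by linarith)
    have hμge : c₀ - 1/(2*M) ≤ μ := le_max_right _ _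
    have hsm : (c₀ - μ) * ‖Ring.inverse (algebraMap ℝ (E →L[ℝ] E) c₀ - D)‖ < 1 := by
      have h1 : c₀ - μ ≤ 1/(2*M) := by linarith
      have h2 : ‖Ring.inverse (algebraMap ℝ (E →L[ℝ] E) c₀ - D)‖ < M := by linarith
      have h3 : 0 ≤ c₀ - μ := by linarith
      calc (c₀ - μ) * ‖Ring.inverse (algebraMap ℝ (E →L[ℝ] E) c₀ - D)‖
          ≤ (1/(2*M)) * M := by
            apply mul_le_mul h1 h2.le hR0 hM0'.le
        _ = 1/2 := by field_simp
        _ < 1 := by norm_num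
    have hμS : μ ∈ S := ⟨hμ1, hμlt.le.trans hc0B,
      aux_step D hμlt.le (hu c₀ hc01) hc0pos hsm⟩
    exact absurd (csInf_le hbdd hμS) (not_le.mpr hμlt)
  intro x hx
  have h := hc0pos x hx
  rw [hc0eq, map_one] at h
  exact h

end Main

/-- Uniqueness of fixed points of a convex operator on an ordered Banach function space
(formalized as a Banach lattice): if at each fixed point `v` of `T` there is a monotone
bounded linear subgradient `D_v` (`T g − T v ≥ D_v (g − v)` for all `g`) with spectral
radius `< 1`, then `T` has at most one fixed point. -/
theorem stmt4 {E : Type*} [NormedAddCommGroup E] [Lattice E] [HasSolidNorm E]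
    [IsOrderedAddMonoid E] [NormedSpace ℝ E] [CompleteSpace E]
    (T : E → E)
    (hconv : ∀ f g : E, ∀ τ : ℝ, 0 ≤ τ → τ ≤ 1 →
      T (τ • f + (1 - τ) • g) ≤ τ • T f + (1 - τ) • T g)
    (hsub : ∀ v : E, T v = v → ∃ D : E →L[ℝ] E,
      (∀ f : E, 0 ≤ f → 0 ≤ D f) ∧
      (∀ g : E, D (g - v) ≤ T g - T v) ∧
      spectralRadius ℝ D < 1) :
    ∀ v v' : E, T v = v → T v' = v' → v = v' := by
  have key : ∀ v v' : E, T v = v → T v' = v' → v ≤ v' := by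
    intro v v' hv hv'
    obtain ⟨D, hDpos, hDsub, hDρ⟩ := hsub v hv
    have hu : ∀ c : ℝ, 1 ≤ c → IsUnit (algebraMap ℝ (E →L[ℝ] E) c - D) := by
      intro c hc
      by_contra hcu
      have hmem : c ∈ spectrum ℝ D := spectrum.mem_iff.mpr hcu
      have hle : (‖c‖₊ : ENNReal) ≤ spectralRadius ℝ D := by
        rw [spectralRadius]
        exact le_iSup₂ (f := fun k (_ : k ∈ spectrum ℝ D) => (‖k‖₊ : ENNReal)) c hmem
      have h1 : (1 : ENNReal) ≤ (‖c‖₊ : ENNReal) := by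
        rw [← ENNReal.coe_one, ENNReal.coe_le_coe, ← NNReal.coe_le_coe]
        simp only [coe_nnnorm, NNReal.coe_one, Real.norm_eq_abs]
        rw [abs_of_nonneg (by linarith)]
        exact hc
      exact absurd (h1.trans hle) (not_le.mpr hDρ)
    have hpos1 := aux_resolvent_pos D hDpos hu
    have hs := hDsub v'
    rw [hv, hv'] at hs
    have h0 : 0 ≤ ((1 : E →L[ℝ] E) - D) (v' - v) := by
      rw [ContinuousLinearMap.sub_apply, ContinuousLinearMap.one_apply]
      exact sub_nonneg.mpr hs
    have h2 : 0 ≤ Ring.inverse ((1 : E →L[ℝ] E) - D) (((1 : E →L[ℝ] E) - D) (v' - v)) :=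
      hpos1 _ h0
    have hunit1 : IsUnit ((1 : E →L[ℝ] E) - D) := by
      have h := hu 1 le_rfl; rwa [map_one] at h
    rw [← ContinuousLinearMap.mul_apply, Ring.inverse_mul_cancel _ hunit1,
      ContinuousLinearMap.one_apply] at h2
    exact sub_nonneg.mp h2
  intro v v' hv hv'
  exact le_antisymm (key v v' hv hv') (key v' v hv' hv)
end

section
/- Suppose u(X_t, X_{t+1}) = X_t where X is an autoregressive gamma process with parameters (c₁, c₂, c₃), c₁, c₂, c₃ > 0, c₁c₂ < 1, whose log conditional moment generating function is log E^Q[e^{sX_{t+1}}|X_t = x] = c₁c₂sx/(1 − sc₁) − c₃ log(1 − sc₁) for s < 1/c₁. If an affine function v(x) = a + bx satisfies Tv = v with Tf(x) = β log E^Q[e^{f(X_{t+1}) + αX_t}|X_t = x], then b solves the quadratic c₁b² − (1 − βc₁(c₂ − α))b + αβ = 0, i.e., b = (1 − βc₁(c₂−α) ± √((1 − βc₁(c₂−α))² − 4αβc₁))/(2c₁), and a = −βc₃ log(1 − bc₁)/(1 − β). In particular, when the discriminant is strictly positive and both roots satisfy 1 − bc₁ > 0, there exist two distinct affine fixed points.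 -/
open MeasureTheory

/-- Affine fixed points of the risk-sensitive recursion for an autoregressive gamma
state process with `u(x,y) = x`. Any affine solution `v(x) = a + bx` (with `bc₁ < 1`)
has `b` solving the quadratic `c₁b² − (1 − βc₁(c₂−α))b + αβ = 0` and
`a = −βc₃ log(1 − bc₁)/(1−β)`; when the discriminant is strictly positive and both roots
satisfy `1 − bc₁ > 0`, there exist two distinct affine fixed points. -/
theorem stmt10 (c₁ c₂ c₃ α β : ℝ)
    (h1 : 0 < c₁) (h2 : 0 < c₂) (h3 : 0 < c₃) (hcc : c₁ * c₂ < 1)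
    (hβ : β ∈ Set.Ioo (0 : ℝ) 1)
    (Q : ℝ → Measure ℝ) (hQ : ∀ x, IsProbabilityMeasure (Q x))
    -- ARG(c₁,c₂,c₃) conditional log moment generating function
    (hmgf : ∀ x ≥ (0 : ℝ), ∀ s : ℝ, s * c₁ < 1 →
      Real.log (∫ y, Real.exp (s * y) ∂(Q x)) =
        c₁ * c₂ * s * x / (1 - s * c₁) - c₃ * Real.log (1 - s * c₁)) :
    -- necessity: affine fixed points solve the quadratic, and a is determined
    (∀ a b : ℝ, b * c₁ < 1 →
      (∀ x ≥ (0 : ℝ),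
        β * Real.log (∫ y, Real.exp ((a + b * y) + α * x) ∂(Q x)) = a + b * x) →
      c₁ * b ^ 2 - (1 - β * c₁ * (c₂ - α)) * b + α * β = 0 ∧
        a = -(β * c₃ * Real.log (1 - b * c₁)) / (1 - β))
    ∧
    -- existence of two distinct affine fixed points
    (0 < (1 - β * c₁ * (c₂ - α)) ^ 2 - 4 * α * β * c₁ →
      ∀ bp bm : ℝ,
        bp = (1 - β * c₁ * (c₂ - α) +
          Real.sqrt ((1 - β * c₁ * (c₂ - α)) ^ 2 - 4 * α * β * c₁)) / (2 * c₁) →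
        bm = (1 - β * c₁ * (c₂ - α) -
          Real.sqrt ((1 - β * c₁ * (c₂ - α)) ^ 2 - 4 * α * β * c₁)) / (2 * c₁) →
        bp * c₁ < 1 → bm * c₁ < 1 →
        bp ≠ bm ∧
        (∀ x ≥ (0 : ℝ),
          β * Real.log (∫ y, Real.exp
            ((-(β * c₃ * Real.log (1 - bp * c₁)) / (1 - β) + bp * y) + α * x) ∂(Q x)) =
          -(β * c₃ * Real.log (1 - bp * c₁)) / (1 - β) + bp * x) ∧
        (∀ x ≥ (0 : ℝ),
          β * Real.log (∫ y, Real.exp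
            ((-(β * c₃ * Real.log (1 - bm * c₁)) / (1 - β) + bm * y) + α * x) ∂(Q x)) =
          -(β * c₃ * Real.log (1 - bm * c₁)) / (1 - β) + bm * x)) := by
  obtain ⟨hβ0, hβ1⟩ := hβ
  have hβne : (1 : ℝ) - β ≠ 0 := by linarith
  -- the mgf integral is strictly positive
  have hI : ∀ x ≥ (0 : ℝ), ∀ b : ℝ, b * c₁ < 1 →
      (0 : ℝ) < ∫ y, Real.exp (b * y) ∂(Q x) := by
    intro x hx b hb
    have hnn : (0 : ℝ) ≤ ∫ y, Real.exp (b * y) ∂(Q x) :=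
      integral_nonneg fun y => (Real.exp_pos _).le
    rcases hnn.lt_or_eq with h | h
    · exact h
    · exfalso
      have hm := hmgf x hx b hb
      rw [← h, Real.log_zero] at hm
      have h1bc : 0 < 1 - b * c₁ := by linarith
      rcases lt_trichotomy b 0 with hb0 | hb0 | hb0
      · have ht0 : c₁ * c₂ * b * x ≤ 0 := by
          nlinarith [mul_nonneg (mul_nonneg h1.le h2.le) hx]
        have ht1 : c₁ * c₂ * b * x / (1 - b * c₁) ≤ 0 :=
          div_nonpos_of_nonpos_of_nonneg ht0 (by linarith)
        have ht2 : 0 < Real.log (1 - b * c₁) := Real.log_pos (by nlinarith)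
        nlinarith [mul_pos h3 ht2]
      · subst hb0
        haveI := hQ x
        simp at h
      · have ht0 : 0 ≤ c₁ * c₂ * b * x := by
          nlinarith [mul_nonneg (mul_nonneg (mul_nonneg h1.le h2.le) hb0.le) hx]
        have ht1 : 0 ≤ c₁ * c₂ * b * x / (1 - b * c₁) :=
          div_nonneg ht0 (by linarith)
        have ht2 : Real.log (1 - b * c₁) < 0 :=
          Real.log_neg (by linarith) (by nlinarith)
        nlinarith [mul_neg_of_pos_of_neg h3 ht2]
  -- the key computation
  have key : ∀ x ≥ (0 : ℝ), ∀ a b : ℝ, b * c₁ < 1 →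
      Real.log (∫ y, Real.exp ((a + b * y) + α * x) ∂(Q x)) =
        a + α * x + (c₁ * c₂ * b * x / (1 - b * c₁) - c₃ * Real.log (1 - b * c₁)) := by
    intro x hx a b hb
    have hrw : ∀ y : ℝ, Real.exp ((a + b * y) + α * x)
        = Real.exp (a + α * x) * Real.exp (b * y) := by
      intro y; rw [← Real.exp_add]; ring_nf
    simp_rw [hrw]
    rw [integral_const_mul, Real.log_mul (Real.exp_ne_zero _) (hI x hx b hb).ne',
      Real.log_exp, hmgf x hx b hb]
  -- the fixed-point verification given the quadratic
  have fixpt : ∀ b : ℝ, b * c₁ < 1 →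
      c₁ * b ^ 2 - (1 - β * c₁ * (c₂ - α)) * b + α * β = 0 →
      ∀ x ≥ (0 : ℝ),
        β * Real.log (∫ y, Real.exp
          ((-(β * c₃ * Real.log (1 - b * c₁)) / (1 - β) + b * y) + α * x) ∂(Q x)) =
        -(β * c₃ * Real.log (1 - b * c₁)) / (1 - β) + b * x := by
    intro b hb hq x hx
    rw [key x hx _ b hb]
    have hDpos : 0 < 1 - b * c₁ := by linarith
    have hD : (1 : ℝ) - b * c₁ ≠ 0 := hDpos.ne'
    set L := Real.log (1 - b * c₁) with hL
    have hA : β * (-(β * c₃ * L) / (1 - β)) - β * (c₃ * L)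
        = -(β * c₃ * L) / (1 - β) := by
      field_simp
      ring
    have hB : β * (α * x) + β * (c₁ * c₂ * b * x / (1 - b * c₁)) = b * x := by
      have hdc : c₁ * c₂ * b * x / (1 - b * c₁) * (1 - b * c₁) = c₁ * c₂ * b * x :=
        div_mul_cancel₀ _ hD
      apply mul_right_cancel₀ hD
      linear_combination x * hq + β * hdc
    linear_combination hA + hB
  constructor
  · -- necessity
    intro a b hb hfix
    have h0 := hfix 0 le_rfl
    rw [key 0 le_rfl a b hb] at h0
    have h1' := hfix 1 (by norm_num)
    rw [key 1 (by norm_num) a b hb] at h1'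
    have hDpos : 0 < 1 - b * c₁ := by linarith
    have hD : (1 : ℝ) - b * c₁ ≠ 0 := hDpos.ne'
    have hcoef : β * α + β * (c₁ * c₂ * b / (1 - b * c₁)) = b := by
      linear_combination h1' - h0
    have hdc : c₁ * c₂ * b / (1 - b * c₁) * (1 - b * c₁) = c₁ * c₂ * b :=
      div_mul_cancel₀ _ hD
    constructor
    · linear_combination (1 - b * c₁) * hcoef - β * hdc
    · rw [eq_div_iff hβne]
      linear_combination -h0
  · -- existence
    intro hdisc bp bm hbp hbm hlp hlm
    set S := 1 - β * c₁ * (c₂ - α) with hS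
    set D := S ^ 2 - 4 * α * β * c₁ with hDdef
    have hsq : Real.sqrt D ^ 2 = D := Real.sq_sqrt hdisc.le
    have hsp : 0 < Real.sqrt D := Real.sqrt_pos.mpr hdisc
    have h2c : (2 : ℝ) * c₁ ≠ 0 := by positivity
    have h2p : bp * (2 * c₁) = S + Real.sqrt D := by
      rw [hbp]; exact div_mul_cancel₀ _ h2c
    have h2m : bm * (2 * c₁) = S - Real.sqrt D := by
      rw [hbm]; exact div_mul_cancel₀ _ h2c
    have hqp : c₁ * bp ^ 2 - S * bp + α * β = 0 := by
      have h4 : 4 * c₁ * (c₁ * bp ^ 2 - S * bp + α * β) = 0 := by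
        linear_combination (bp * (2 * c₁) + (S + Real.sqrt D) - 2 * S) * h2p + hsq
      have := mul_eq_zero.mp h4
      rcases this with h | h
      · exact absurd h (by positivity)
      · exact h
    have hqm : c₁ * bm ^ 2 - S * bm + α * β = 0 := by
      have h4 : 4 * c₁ * (c₁ * bm ^ 2 - S * bm + α * β) = 0 := by
        linear_combination (bm * (2 * c₁) + (S - Real.sqrt D) - 2 * S) * h2m + hsq
      have := mul_eq_zero.mp h4
      rcases this with h | h
      · exact absurd h (by positivity)
      · exact h
    refine ⟨?_, fixpt bp hlp hqp, fixpt bm hlm hqm⟩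
    have : bm < bp := by
      rw [hbp, hbm]
      exact (div_lt_div_iff_of_pos_right (by positivity)).mpr (by linarith)
    exact this.ne'
end

section
/- Let T, T̂ be monotone convex operators on an ordered Banach function space with common extension such that T̂f = T(η̂ + f) − βκ_{η̂} for a fixed function η̂ and constant-in-f correction βκ_{η̂}, and let v, v̂ satisfy Tv = v and T̂v̂ = v̂. Suppose the subgradients D_{η̂+v} and D_{η̂+v̂} are monotone bounded linear operators with spectral radius less than 1, so (I − D_{η̂+v})^{−1} and (I − D_{η̂+v̂})^{−1} exist and are monotone. Then the two-sided sandwich bound holds: (I − D_{η̂+v̂})^{−1}(T̂v − v) ≥ v̂ − v ≥ (I − D_{η̂+v})^{−1}(T̂v − v), and consequently ‖v̂ − v‖ ≤ ‖(I − D_{η̂+v})^{−1}(T̂v − v)‖ + ‖(I − D_{η̂+v̂})^{−1}(T̂v − v)‖ in any lattice norm. -/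
open Filter Topology
open scoped ENNReal NNReal
set_option maxHeartbeats 1000000
set_option synthInstance.maxHeartbeats 400000

section Stmt12Aux

variable {E : Type*} [NormedAddCommGroup E] [Lattice E] [HasSolidNorm E]
    [IsOrderedAddMonoid E] [NormedSpace ℝ E] [CompleteSpace E]

private lemma stmt12_nonneg_of_double {w : E} (h : 0 ≤ w + w) : 0 ≤ w :=
  nsmul_two_semiclosed (by simpa [two_nsmul] using h)

private lemma stmt12_smul_nonneg {c : ℝ} {z : E} (hc : 0 ≤ c) (hz : 0 ≤ z) : 0 ≤ c • z := by
  have hnat : ∀ n : ℕ, 0 ≤ (n : ℝ) • z := by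
    intro n
    induction n with
    | zero => simp
    | succ n ih =>
        push_cast
        rw [add_smul, one_smul]
        exact add_nonneg ih hz
  have hdy : ∀ k : ℕ, ∀ w : E, 0 ≤ ((2 : ℝ) ^ k) • w → 0 ≤ w := by
    intro k
    induction k with
    | zero => intro w h; simpa using h
    | succ k ih =>
        intro w h
        rw [pow_succ, mul_smul] at h
        have := ih _ h
        exact stmt12_nonneg_of_double (by rwa [two_smul ℝ w] at this)
  -- dyadic approximation of c from below
  have hkey : ∀ k : ℕ, 0 ≤ ((⌊c * 2 ^ k⌋₊ : ℝ) / 2 ^ k) • z := by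
    intro k
    apply hdy k
    rw [smul_smul]
    have h2k : (2 : ℝ) ^ k ≠ 0 := by positivity
    rw [mul_div_cancel₀ _ h2k]
    exact hnat _
  have htend : Tendsto (fun k : ℕ => ((⌊c * 2 ^ k⌋₊ : ℝ) / 2 ^ k) • z) atTop (𝓝 (c • z)) := by
    apply Tendsto.smul_const
    have h1 : Tendsto (fun x : ℝ => (⌊c * x⌋₊ : ℝ) / x) atTop (𝓝 c) :=
      tendsto_nat_floor_mul_div_atTop hc
    have h2 : Tendsto (fun k : ℕ => (2 : ℝ) ^ k) atTop atTop :=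
      tendsto_pow_atTop_atTop_of_one_lt one_lt_two
    exact h1.comp h2
  exact ge_of_tendsto' htend hkey

/-- positivity of a continuous linear operator. -/
private def Stmt12IsPos (S : E →L[ℝ] E) : Prop := ∀ x : E, 0 ≤ x → 0 ≤ S x

private lemma stmt12_isPos_mul {S T : E →L[ℝ] E} (hS : Stmt12IsPos S) (hT : Stmt12IsPos T) :
    Stmt12IsPos (S * T) := fun x hx => hS _ (hT _ hx)

private lemma stmt12_isPos_smul {S : E →L[ℝ] E} (hS : Stmt12IsPos S) {c : ℝ} (hc : 0 ≤ c) :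
    Stmt12IsPos (c • S) := fun x hx => by
  rw [ContinuousLinearMap.smul_apply]
  exact stmt12_smul_nonneg hc (hS x hx)

private lemma stmt12_isPos_pow {S : E →L[ℝ] E} (hS : Stmt12IsPos S) :
    ∀ n : ℕ, Stmt12IsPos (S ^ n)
  | 0 => fun x hx => by simpa using hx
  | n + 1 => by
      rw [pow_succ]
      exact stmt12_isPos_mul (stmt12_isPos_pow hS n) hS

private lemma stmt12_isPos_tsum {f : ℕ → E →L[ℝ] E} (hsum : Summable f)
    (h : ∀ n, Stmt12IsPos (f n)) : Stmt12IsPos (∑' n, f n) := by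
  intro x hx
  have h1 : HasSum (fun n => f n x) ((∑' n, f n) x) := by
    have := (ContinuousLinearMap.apply ℝ E x).hasSum hsum.hasSum
    simpa using this
  exact hasSum_le (fun n => h n x hx) hasSum_zero h1

private lemma stmt12_exists_pos_inverse (D : E →L[ℝ] E) (hD : Stmt12IsPos D)
    (hρ : spectralRadius ℝ D < 1) :
    ∃ S : E →L[ℝ] E, Stmt12IsPos S ∧ S * (1 - D) = 1 ∧ (1 - D) * S = 1 := by
  have hunit : ∀ t : ℝ, 1 ≤ t → IsUnit (algebraMap ℝ (E →L[ℝ] E) t - D) := by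
    intro t ht
    have h1 : spectralRadius ℝ D < ‖t‖₊ := by
      apply lt_of_lt_of_le hρ
      rw [← ENNReal.coe_one, ENNReal.coe_le_coe, ← NNReal.coe_le_coe, coe_nnnorm,
        NNReal.coe_one, Real.norm_eq_abs, abs_of_nonneg (by linarith : (0:ℝ) ≤ t)]
      exact ht
    exact spectrum.mem_resolventSet_of_spectralRadius_lt h1
  set R : ℝ → (E →L[ℝ] E) := fun t => Ring.inverse (algebraMap ℝ (E →L[ℝ] E) t - D) with hR
  have hRmul : ∀ t : ℝ, 1 ≤ t → (algebraMap ℝ (E →L[ℝ] E) t - D) * R t = 1 := fun t ht =>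
    Ring.mul_inverse_cancel _ (hunit t ht)
  have hRmul' : ∀ t : ℝ, 1 ≤ t → R t * (algebraMap ℝ (E →L[ℝ] E) t - D) = 1 := fun t ht =>
    Ring.inverse_mul_cancel _ (hunit t ht)
  have hRuniq : ∀ t : ℝ, 1 ≤ t → ∀ S : E →L[ℝ] E,
      (algebraMap ℝ (E →L[ℝ] E) t - D) * S = 1 → R t = S := by
    intro t ht S hS
    calc R t = R t * ((algebraMap ℝ (E →L[ℝ] E) t - D) * S) := by rw [hS, mul_one]
      _ = (R t * (algebraMap ℝ (E →L[ℝ] E) t - D)) * S := by rw [mul_assoc]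
      _ = S := by rw [hRmul' t ht, one_mul]
  -- base case: large t
  have hbase : ∀ t : ℝ, ‖D‖ < t → 1 ≤ t → Stmt12IsPos (R t) := by
    intro t hDt ht1
    have ht0 : (0 : ℝ) < t := lt_of_lt_of_le one_pos ht1
    have hnorm : ‖t⁻¹ • D‖ < 1 := by
      have heq : ‖t⁻¹ • D‖ = |t⁻¹| * ‖D‖ := norm_smul (α := ℝ) (β := E →L[ℝ] E) _ _
      rw [heq, abs_of_pos (inv_pos.2 ht0), ← div_eq_inv_mul, div_lt_one ht0]
      exact hDt
    set S : E →L[ℝ] E := t⁻¹ • ∑' n : ℕ, (t⁻¹ • D) ^ n with hSdef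
    have hfact : algebraMap ℝ (E →L[ℝ] E) t - D = t • ((1 : E →L[ℝ] E) - t⁻¹ • D) := by
      rw [smul_sub, Algebra.algebraMap_eq_smul_one, smul_smul, mul_inv_cancel₀ ht0.ne', one_smul]
    have hmul : (algebraMap ℝ (E →L[ℝ] E) t - D) * S = 1 := by
      rw [hfact, hSdef, smul_mul_assoc, mul_smul_comm, smul_smul, mul_inv_cancel₀ ht0.ne',
        one_smul]
      exact mul_neg_geom_series _ hnorm
    have hRS : R t = S := hRuniq t ht1 S hmul
    rw [hRS]
    apply stmt12_isPos_smul _ (le_of_lt (inv_pos.2 ht0))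
    apply stmt12_isPos_tsum (summable_geometric_of_norm_lt_one hnorm)
    intro n
    exact stmt12_isPos_pow (stmt12_isPos_smul hD (le_of_lt (inv_pos.2 ht0))) n
  -- step lemma
  have hstep : ∀ μ lam : ℝ, 1 ≤ lam → lam ≤ μ → Stmt12IsPos (R μ) →
      (μ - lam) * ‖R μ‖ < 1 → Stmt12IsPos (R lam) := by
    intro μ lam hlam1 hlamμ hposμ hsmall
    have hμ1 : 1 ≤ μ := hlam1.trans hlamμ
    set c : ℝ := μ - lam with hc
    have hc0 : 0 ≤ c := by simp only [hc]; linarith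
    have hnorm : ‖c • R μ‖ < 1 := by
      have heq : ‖c • R μ‖ = |c| * ‖R μ‖ := norm_smul (α := ℝ) (β := E →L[ℝ] E) _ _
      rw [heq, abs_of_nonneg hc0]; exact hsmall
    have hfact : algebraMap ℝ (E →L[ℝ] E) lam - D = (algebraMap ℝ (E →L[ℝ] E) μ - D) * ((1 : E →L[ℝ] E) - c • R μ) := by
      rw [mul_sub, mul_one, mul_smul_comm, hRmul μ hμ1]
      rw [Algebra.algebraMap_eq_smul_one, Algebra.algebraMap_eq_smul_one, hc, sub_smul]
      abel
    set S : E →L[ℝ] E := (∑' n : ℕ, (c • R μ) ^ n) * R μ with hSdef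
    have hgeom : ((1 : E →L[ℝ] E) - c • R μ) * (∑' n : ℕ, (c • R μ) ^ n) = 1 :=
      mul_neg_geom_series _ hnorm
    have hmul : (algebraMap ℝ (E →L[ℝ] E) lam - D) * S = 1 := by
      rw [hfact, hSdef, mul_assoc, ← mul_assoc ((1 : E →L[ℝ] E) - c • R μ), hgeom, one_mul, hRmul μ hμ1]
    have hRS : R lam = S := hRuniq lam hlam1 S hmul
    rw [hRS]
    apply stmt12_isPos_mul _ hposμ
    apply stmt12_isPos_tsum (summable_geometric_of_norm_lt_one hnorm)
    intro n
    exact stmt12_isPos_pow (stmt12_isPos_smul hposμ hc0) n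
  -- the infimum argument
  set t₀ : ℝ := ‖D‖ + 1 with ht₀
  have ht₀1 : 1 ≤ t₀ := by simp only [ht₀]; linarith [norm_nonneg D]
  set P : Set ℝ := {t | 1 ≤ t ∧ ∀ u : ℝ, t ≤ u → Stmt12IsPos (R u)} with hPdef
  have ht₀P : t₀ ∈ P := by
    refine ⟨ht₀1, fun u hu => hbase u ?_ (ht₀1.trans hu)⟩
    simp only [ht₀] at hu ⊢; linarith
  have hbdd : BddBelow P := ⟨1, fun t ht => ht.1⟩
  set b : ℝ := sInf P with hb
  have hb1 : 1 ≤ b := le_csInf ⟨t₀, ht₀P⟩ fun t ht => ht.1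
  have hbu : ∀ u : ℝ, b < u → Stmt12IsPos (R u) := by
    intro u hu
    obtain ⟨t, htP, htu⟩ := exists_lt_of_csInf_lt ⟨t₀, ht₀P⟩ hu
    exact htP.2 u htu.le
  have hcont : ContinuousAt R b := by
    have h1 : ContinuousAt Ring.inverse ((algebraMap ℝ (E →L[ℝ] E) b - D)) := by
      have hu := hunit b hb1
      have := NormedRing.inverse_continuousAt hu.unit
      rwa [IsUnit.unit_spec] at this
    have h2 : Continuous fun t : ℝ => algebraMap ℝ (E →L[ℝ] E) t - D :=
      ((continuous_algebraMap ℝ (E →L[ℝ] E))).sub continuous_const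
    have h3 : ContinuousAt (Ring.inverse ∘ fun t : ℝ => algebraMap ℝ (E →L[ℝ] E) t - D) b :=
      ContinuousAt.comp (x := b) h1 h2.continuousAt
    exact h3
  have hRb : Stmt12IsPos (R b) := by
    intro x hx
    have htend : Tendsto (fun u : ℝ => R u x) (𝓝[>] b) (𝓝 (R b x)) := by
      have := ((ContinuousLinearMap.apply ℝ E x).continuous.continuousAt.comp hcont)
      exact this.tendsto.mono_left nhdsWithin_le_nhds
    refine ge_of_tendsto htend ?_
    filter_upwards [self_mem_nhdsWithin] with u hu
    exact hbu u hu x hx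
  have hbP : b ∈ P := by
    refine ⟨hb1, fun u hu => ?_⟩
    rcases hu.eq_or_lt with h | h
    · rw [← h]; exact hRb
    · exact hbu u h
  have hbeq : b = 1 := by
    by_contra h
    have hb1' : 1 < b := lt_of_le_of_ne hb1 (Ne.symm h)
    set N : ℝ := ‖R b‖ with hN
    have hN0 : 0 ≤ N := norm_nonneg _
    set lam : ℝ := max 1 (b - (1 + N)⁻¹) with hlamdef
    have hlam1 : 1 ≤ lam := le_max_left _ _
    have hinvpos : 0 < (1 + N)⁻¹ := by positivity
    have hlamb : lam < b := by
      apply max_lt hb1'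
      linarith
    have hlamP : lam ∈ P := by
      refine ⟨hlam1, fun u hu => ?_⟩
      rcases le_or_gt b u with h' | h'
      · exact hbP.2 u h'
      · apply hstep b u (hlam1.trans hu) h'.le hRb
        have h1 : b - u ≤ (1 + N)⁻¹ := by
          have h2 : b - (1 + N)⁻¹ ≤ lam := le_max_right _ _
          linarith
        have h3 : (1 + N)⁻¹ * N < 1 := by
          rw [← div_eq_inv_mul, div_lt_one (by positivity)]
          linarith
        calc (b - u) * N ≤ (1 + N)⁻¹ * N := mul_le_mul_of_nonneg_right h1 hN0
          _ < 1 := h3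
    have : b ≤ lam := csInf_le hbdd hlamP
    linarith
  refine ⟨R 1, ?_, ?_, ?_⟩
  · rw [← hbeq]; exact hRb
  · have := hRmul' 1 le_rfl
    rwa [map_one] at this
  · have := hRmul 1 le_rfl
    rwa [map_one] at this

private lemma stmt12_nonneg_of_sub (D : E →L[ℝ] E) (hD : ∀ f : E, 0 ≤ f → 0 ≤ D f)
    (hρ : spectralRadius ℝ D < 1) {x : E} (hx : 0 ≤ x - D x) : 0 ≤ x := by
  obtain ⟨S, hS, hS1, _⟩ := stmt12_exists_pos_inverse D hD hρ
  have hSx : S (x - D x) = x := by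
    have h := congrArg (fun T : E →L[ℝ] E => T x) hS1
    simpa [ContinuousLinearMap.mul_apply, ContinuousLinearMap.sub_apply,
      ContinuousLinearMap.one_apply, map_sub] using h
  rw [← hSx]
  exact hS _ hx

end Stmt12Aux

/-- Two-sided sandwich bound for fixed points of a perturbed monotone convex operator.
If `T̂f = T(η̂ + f) − κ` with `Tv = v` and `T̂v̂ = v̂`, and `D₁`, `D₂` are monotone
bounded linear subgradients of `T` at `η̂ + v` and `η̂ + v̂` with spectral radius `< 1`,
then with `w₁ = (I − D₁)⁻¹(T̂v − v)` and `w₂ = (I − D₂)⁻¹(T̂v − v)` one has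
`w₁ ≤ v̂ − v ≤ w₂`, and hence `‖v̂ − v‖ ≤ ‖w₁‖ + ‖w₂‖` in the lattice norm. -/
theorem stmt12 {E : Type*} [NormedAddCommGroup E] [Lattice E] [HasSolidNorm E]
    [IsOrderedAddMonoid E] [NormedSpace ℝ E]
    [CompleteSpace E]
    (T That : E → E) (ηhat κ : E)
    (hrel : ∀ f, That f = T (ηhat + f) - κ)
    (hTmono : ∀ f g : E, f ≤ g → T f ≤ T g)
    (hTconv : ∀ f g : E, ∀ τ : ℝ, 0 ≤ τ → τ ≤ 1 →
      T (τ • f + (1 - τ) • g) ≤ τ • T f + (1 - τ) • T g)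
    (v vhat : E) (hv : T v = v) (hvhat : That vhat = vhat)
    (D1 D2 : E →L[ℝ] E)
    (hD1pos : ∀ f : E, 0 ≤ f → 0 ≤ D1 f)
    (hD2pos : ∀ f : E, 0 ≤ f → 0 ≤ D2 f)
    (hD1sub : ∀ g : E, D1 (g - (ηhat + v)) ≤ T g - T (ηhat + v))
    (hD2sub : ∀ g : E, D2 (g - (ηhat + vhat)) ≤ T g - T (ηhat + vhat))
    (hρ1 : spectralRadius ℝ D1 < 1) (hρ2 : spectralRadius ℝ D2 < 1) :
    ∀ w₁ w₂ : E, w₁ - D1 w₁ = That v - v → w₂ - D2 w₂ = That v - v →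
      w₁ ≤ vhat - v ∧ vhat - v ≤ w₂ ∧ ‖vhat - v‖ ≤ ‖w₁‖ + ‖w₂‖ := by
  intro w₁ w₂ hw₁ hw₂
  set u : E := vhat - v with hu
  have hTv : T (ηhat + v) = That v + κ := by rw [hrel v]; abel
  have hTvhat : T (ηhat + vhat) = vhat + κ := by
    have h := hrel vhat
    rw [hvhat] at h
    rw [eq_sub_iff_add_eq] at h
    exact h.symm
  -- lower bound
  have h1 : D1 u ≤ vhat - That v := by
    have h := hD1sub (ηhat + vhat)
    have harg : ηhat + vhat - (ηhat + v) = u := by rw [hu]; abel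
    rw [harg, hTvhat, hTv] at h
    calc D1 u ≤ vhat + κ - (That v + κ) := h
      _ = vhat - That v := by abel
  have hx1 : 0 ≤ (u - w₁) - D1 (u - w₁) := by
    rw [map_sub]
    have heq : (u - w₁) - (D1 u - D1 w₁) = (u - D1 u) - (That v - v) := by
      rw [← hw₁]; abel
    rw [heq, sub_nonneg]
    have h2 : u - (vhat - That v) ≤ u - D1 u := sub_le_sub_left h1 u
    calc That v - v = u - (vhat - That v) := by rw [hu]; abel
      _ ≤ u - D1 u := h2
  have hge1 : w₁ ≤ u := by
    exact sub_nonneg.mp (stmt12_nonneg_of_sub D1 hD1pos hρ1 hx1)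
  -- upper bound
  have h2 : -(D2 u) ≤ That v - vhat := by
    have h := hD2sub (ηhat + v)
    have harg : ηhat + v - (ηhat + vhat) = -u := by rw [hu]; abel
    rw [harg, hTv, hTvhat, map_neg] at h
    calc -(D2 u) ≤ That v + κ - (vhat + κ) := h
      _ = That v - vhat := by abel
  have hx2 : 0 ≤ (w₂ - u) - D2 (w₂ - u) := by
    rw [map_sub]
    have heq : (w₂ - u) - (D2 w₂ - D2 u) = (That v - v) - (u - D2 u) := by
      rw [← hw₂]; abel
    rw [heq, sub_nonneg]
    have h3 : u + -(D2 u) ≤ u + (That v - vhat) := add_le_add_right h2 u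
    calc u - D2 u = u + -(D2 u) := by abel
      _ ≤ u + (That v - vhat) := h3
      _ = That v - v := by rw [hu]; abel
  have hge2 : u ≤ w₂ := by
    exact sub_nonneg.mp (stmt12_nonneg_of_sub D2 hD2pos hρ2 hx2)
  refine ⟨hge1, hge2, ?_⟩
  have habs : |u| ≤ |w₁| + |w₂| := by
    rw [abs_le']
    constructor
    · exact hge2.trans ((le_abs_self w₂).trans (le_add_of_nonneg_left (abs_nonneg w₁)))
    · have : -u ≤ -w₁ := neg_le_neg hge1
      exact this.trans ((neg_le_abs w₁).trans (le_add_of_nonneg_right (abs_nonneg w₂)))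
  have hsolid : ‖u‖ ≤ ‖|w₁| + |w₂|‖ := by
    apply HasSolidNorm.solid
    rwa [abs_of_nonneg (add_nonneg (abs_nonneg w₁) (abs_nonneg w₂))]
  calc ‖u‖ ≤ ‖|w₁| + |w₂|‖ := hsolid
    _ ≤ ‖|w₁|‖ + ‖|w₂|‖ := norm_add_le _ _
    _ = ‖w₁‖ + ‖w₂‖ := by rw [norm_abs_eq_norm, norm_abs_eq_norm]
end
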